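/- arXiv:0803.0998 — 2 statements merged into one kernel-verified Lean document; each statement's English description precedes it below -/
import Mathlib

section
/- Let R be a commutative noetherian ring, C a semidualizing R-module, and M an R-module. The Pontryagin dual M* = Hom_ℤ(M, ℚ/ℤ) is C-injective if and only if M is C-flat. -/
open CategoryTheory TensorProduct

universe u

section
variable (R : Type u) [CommRing R]

def extZero (M N : ModuleCat.{u} R) : Prop :=
  ∀ i : ℕ, 1 ≤ i → Subsingleton (((Ext R (ModuleCat.{u} R) i).obj (Opposite.op M)).obj N)

def torZero (M N : ModuleCat.{u} R) : Prop :=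
  ∀ i : ℕ, 1 ≤ i → Subsingleton (((Tor (ModuleCat.{u} R) i).obj M).obj N)

def IsSemidualizing (C : ModuleCat.{u} R) : Prop :=
  Module.Finite R C ∧ Function.Bijective (LinearMap.lsmul R C) ∧ extZero R C C

/-- A module is `C`-flat if it is isomorphic to `F ⊗[R] C` with `F` flat. -/
def IsCFlat (C M : ModuleCat.{u} R) : Prop :=
  ∃ F : ModuleCat.{u} R, Module.Flat R F ∧ Nonempty (M ≃ₗ[R] (F ⊗[R] C))

def IsCInjective (C M : ModuleCat.{u} R) : Prop :=
  ∃ I : ModuleCat.{u} R, Module.Injective R I ∧ Nonempty (M ≃ₗ[R] (↥C →ₗ[R] ↥I))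

/-- cotorsion: `Ext^{≥1}(F, N) = 0` for all flat `F`. -/
def IsCotorsion (N : ModuleCat.{u} R) : Prop :=
  ∀ F : ModuleCat.{u} R, Module.Flat R F → extZero R F N

/-- `C`-cotorsion: `Ext^{≥1}(F ⊗ C, N) = 0` for all flat `F`. -/
def IsCCotorsion (C N : ModuleCat.{u} R) : Prop :=
  ∀ F : ModuleCat.{u} R, Module.Flat R F →
    extZero R (ModuleCat.of R (↥F ⊗[R] ↥C)) N

/-- `C`-flat `C`-cotorsion: isomorphic to `F ⊗ C` with `F` flat and cotorsion. -/
def IsCFlatCotorsion (C M : ModuleCat.{u} R) : Prop :=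
  ∃ F : ModuleCat.{u} R, Module.Flat R F ∧ IsCotorsion R F ∧
    Nonempty (M ≃ₗ[R] (F ⊗[R] C))

/-- The natural evaluation map `C ⊗ Hom(C,M) → M`. -/
noncomputable def evalMap (C M : ModuleCat.{u} R) :
    (↥C ⊗[R] (↥C →ₗ[R] ↥M)) →ₗ[R] ↥M :=
  TensorProduct.lift (LinearMap.id (R := R) (M := ↥C →ₗ[R] ↥M)).flip

/-- The Bass class `B_C(R)`. -/
noncomputable def InBassClass (C M : ModuleCat.{u} R) : Prop :=
  extZero R C M ∧
  torZero R C (ModuleCat.of R (↥C →ₗ[R] ↥M)) ∧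
  Function.Bijective (evalMap R C M)

/-- A `ℤ`-indexed complex of `R`-modules: `d i : X (i+1) → X i`. -/
structure ZComplex where
  X : ℤ → ModuleCat.{u} R
  d : ∀ i : ℤ, ↥(X (i + 1)) →ₗ[R] ↥(X i)
  d_comp_d : ∀ i : ℤ, (d i).comp (d (i + 1)) = 0

namespace ZComplex

variable {R} (Z : ZComplex R)

/-- Exactness of the complex. -/
def IsExact : Prop := ∀ i : ℤ, Function.Exact (Z.d (i + 1)) (Z.d i)

/-- Exactness of `Z ⊗[R] J`. -/
def TensorExact (J : ModuleCat.{u} R) : Prop :=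
  ∀ i : ℤ, Function.Exact (LinearMap.rTensor (↥J) (Z.d (i + 1)))
    (LinearMap.rTensor (↥J) (Z.d i))

/-- Exactness of `Hom_R(V, Z)`. -/
def HomFromExact (V : ModuleCat.{u} R) : Prop :=
  ∀ i : ℤ, Function.Exact
    (fun f : ↥V →ₗ[R] ↥(Z.X (i + 1 + 1)) => (Z.d (i + 1)).comp f)
    (fun f : ↥V →ₗ[R] ↥(Z.X (i + 1)) => (Z.d i).comp f)

/-- Exactness of `Hom_R(Z, V)`. -/
def HomToExact (V : ModuleCat.{u} R) : Prop :=
  ∀ i : ℤ, Function.Exact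
    (fun g : ↥(Z.X i) →ₗ[R] ↥V => g.comp (Z.d i))
    (fun g : ↥(Z.X (i + 1)) →ₗ[R] ↥V => g.comp (Z.d (i + 1)))

/-- `M ≅ Coker(∂₁)`. -/
def IsCokerOfD1 (M : ModuleCat.{u} R) : Prop :=
  Nonempty (↥M ≃ₗ[R] (↥(Z.X 0) ⧸ LinearMap.range (Z.d 0)))

end ZComplex

end

section
variable (R : Type u) [CommRing R]

/-- A complete `FF_C`-resolution witnessing that `M` is `G_C`-flat. -/
def IsGCFlat (C M : ModuleCat.{u} R) : Prop :=
  ∃ Z : ZComplex R, Z.IsExact ∧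
    (∀ i : ℤ, 0 ≤ i → Module.Flat R (Z.X i)) ∧
    (∀ i : ℤ, i < 0 → IsCFlat R C (Z.X i)) ∧
    (∀ J : ModuleCat.{u} R, IsCInjective R C J → Z.TensorExact J) ∧
    Z.IsCokerOfD1 M

def IsCProjective (C M : ModuleCat.{u} R) : Prop :=
  ∃ P : ModuleCat.{u} R, Module.Projective R P ∧ Nonempty (M ≃ₗ[R] (P ⊗[R] C))

/-- A complete `PP_C`-resolution witnessing that `M` is `G_C`-projective. -/
def IsGCProjective (C M : ModuleCat.{u} R) : Prop :=
  ∃ Z : ZComplex R, Z.IsExact ∧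
    (∀ i : ℤ, 0 ≤ i → Module.Projective R (Z.X i)) ∧
    (∀ i : ℤ, i < 0 → IsCProjective R C (Z.X i)) ∧
    (∀ Q : ModuleCat.{u} R, IsCProjective R C Q → Z.HomToExact Q) ∧
    Z.IsCokerOfD1 M

/-- `G(𝒳)` for a class `𝒳` of modules. -/
def GClass (𝒳 : ModuleCat.{u} R → Prop) (M : ModuleCat.{u} R) : Prop :=
  ∃ Z : ZComplex R, Z.IsExact ∧
    (∀ i : ℤ, 𝒳 (Z.X i)) ∧
    (∀ V : ModuleCat.{u} R, 𝒳 V → Z.HomFromExact V) ∧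
    (∀ V : ModuleCat.{u} R, 𝒳 V → Z.HomToExact V) ∧
    Z.IsCokerOfD1 M

/-- Iterates `G^n(𝒳)`, with `G^0(𝒳) = 𝒳`. -/
def GIter : ℕ → (ModuleCat.{u} R → Prop) → (ModuleCat.{u} R → Prop)
  | 0, 𝒳 => 𝒳
  | n + 1, 𝒳 => GClass R (GIter n 𝒳)

/-- `H_C(𝒳)`: modules with a `P_C F_C^cot`-complete `𝒳`-resolution. -/
def HClass (C : ModuleCat.{u} R) (𝒳 : ModuleCat.{u} R → Prop) (M : ModuleCat.{u} R) : Prop :=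
  ∃ Z : ZComplex R, Z.IsExact ∧
    (∀ i : ℤ, 𝒳 (Z.X i)) ∧
    (∀ P : ModuleCat.{u} R, Module.Projective R P →
      Z.HomFromExact (ModuleCat.of R (↥P ⊗[R] ↥C))) ∧
    (∀ N : ModuleCat.{u} R, IsCFlatCotorsion R C N → Z.HomToExact N) ∧
    Z.IsCokerOfD1 M

/-- Iterates `H_C^n(𝒳)`, with `H_C^0(𝒳) = 𝒳`. -/
def HIter (C : ModuleCat.{u} R) : ℕ → (ModuleCat.{u} R → Prop) → (ModuleCat.{u} R → Prop)
  | 0, 𝒳 => 𝒳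
  | n + 1, 𝒳 => HClass R C (HIter C n 𝒳)

/-- `M` admits a resolution `0 → X_n → ⋯ → X_0 → M → 0` with each `X_i` in `𝒳`. -/
def HasResOfLength (𝒳 : ModuleCat.{u} R → Prop) (n : ℕ) (M : ModuleCat.{u} R) : Prop :=
  ∃ (P : ℕ → ModuleCat.{u} R) (d : ∀ i : ℕ, ↥(P (i + 1)) →ₗ[R] ↥(P i))
    (ε : ↥(P 0) →ₗ[R] ↥M),
      Function.Surjective ε ∧ Function.Exact (d 0) ε ∧
      (∀ i : ℕ, Function.Exact (d (i + 1)) (d i)) ∧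
      (∀ i : ℕ, i ≤ n → 𝒳 (P i)) ∧
      (∀ i : ℕ, n < i → Subsingleton (P i))

/-- `M` admits a coresolution `0 → M → Y_0 → ⋯ → Y_n → 0` with each `Y_i` in `𝒳`. -/
def HasCoresOfLength (𝒳 : ModuleCat.{u} R → Prop) (n : ℕ) (M : ModuleCat.{u} R) : Prop :=
  ∃ (P : ℕ → ModuleCat.{u} R) (d : ∀ i : ℕ, ↥(P i) →ₗ[R] ↥(P (i + 1)))
    (η : ↥M →ₗ[R] ↥(P 0)),
      Function.Injective η ∧ Function.Exact η (d 0) ∧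
      (∀ i : ℕ, Function.Exact (d i) (d (i + 1))) ∧
      (∀ i : ℕ, i ≤ n → 𝒳 (P i)) ∧
      (∀ i : ℕ, n < i → Subsingleton (P i))

/-- `C` is a dualizing module: semidualizing of finite injective dimension. -/
def IsDualizing (C : ModuleCat.{u} R) : Prop :=
  IsSemidualizing R C ∧
  ∃ n : ℕ, HasCoresOfLength R (fun I => Module.Injective R ↥I) n C

end


namespace Stmt10Aux

variable {R : Type u} [CommRing R]

section chase
variable {A1 A2 A3 B1 B2 B3 : Type*}
  [AddCommGroup A1] [AddCommGroup A2] [AddCommGroup A3]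
  [AddCommGroup B1] [AddCommGroup B2] [AddCommGroup B3]
  [Module R A1] [Module R A2] [Module R A3] [Module R B1] [Module R B2] [Module R B3]

lemma chase (f : A1 →ₗ[R] A2) (g : A2 →ₗ[R] A3) (f' : B1 →ₗ[R] B2) (g' : B2 →ₗ[R] B3)
    (t1 : A1 →ₗ[R] B1) (t2 : A2 →ₗ[R] B2) (t3 : A3 →ₗ[R] B3)
    (hfg : Function.Exact f g) (hg : Function.Surjective g)
    (hf'g' : Function.Exact f' g') (hg' : Function.Surjective g')
    (sq1 : ∀ a, f' (t1 a) = t2 (f a)) (sq2 : ∀ a, g' (t2 a) = t3 (g a))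
    (h1 : Function.Surjective t1) (h2 : Function.Bijective t2) :
    Function.Bijective t3 := by
  constructor
  · rw [injective_iff_map_eq_zero]
    intro a3 h3
    obtain ⟨a2, rfl⟩ := hg a3
    have hker : g' (t2 a2) = 0 := by rw [sq2, h3]
    obtain ⟨b1, hb1⟩ := (hf'g' _).mp hker
    obtain ⟨a1, rfl⟩ := h1 b1
    rw [sq1] at hb1
    have : f a1 = a2 := h2.1 hb1
    rw [← this, hfg.apply_apply_eq_zero]
  · intro b3
    obtain ⟨b2, rfl⟩ := hg' b3
    obtain ⟨a2, rfl⟩ := h2.2 b2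
    exact ⟨g a2, (sq2 a2).symm⟩

end chase

section teval

variable (X X' N I : Type u) [AddCommGroup X] [Module R X] [AddCommGroup X'] [Module R X']
  [AddCommGroup N] [Module R N] [AddCommGroup I] [Module R I]

/-- tensor evaluation `X ⊗ Hom(N,I) → Hom(Hom(X,N), I)`. -/
noncomputable def teval : (X ⊗[R] (N →ₗ[R] I)) →ₗ[R] ((X →ₗ[R] N) →ₗ[R] I) :=
  TensorProduct.lift (((LinearMap.llcomp R (X →ₗ[R] N) N I).flip).comp LinearMap.applyₗ)

@[simp] lemma teval_tmul (x : X) (φ : N →ₗ[R] I) (g : X →ₗ[R] N) :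
    teval X N I (x ⊗ₜ[R] φ) g = φ (g x) := rfl

variable {X X'}

lemma teval_natural (f : X' →ₗ[R] X) :
    (teval X N I).comp (f.rTensor (N →ₗ[R] I)) =
      (LinearMap.lcomp R I (LinearMap.lcomp R N f)).comp (teval X' N I) := by
  apply TensorProduct.ext'
  intro x φ
  ext g
  rfl

end teval

section base

variable (N I : Type u) [AddCommGroup N] [Module R N] [AddCommGroup I] [Module R I]

/-- `ν ↦ (x ↦ x i • ν)`. -/
def uMap (k : ℕ) (i : Fin k) : N →ₗ[R] ((Fin k → R) →ₗ[R] N) where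
  toFun ν := (LinearMap.proj i).smulRight ν
  map_add' ν ν' := LinearMap.ext fun x => by
    simp only [LinearMap.smulRight_apply, LinearMap.add_apply, smul_add]
  map_smul' r ν := LinearMap.ext fun x => by
    simp only [LinearMap.smulRight_apply, RingHom.id_apply, LinearMap.smul_apply]
    rw [smul_comm]

lemma teval_bij_free (k : ℕ) : Function.Bijective (teval (R := R) (Fin k → R) N I) := by
  rw [Function.bijective_iff_has_inverse]
  refine ⟨fun c => ∑ i : Fin k, Pi.single i (1 : R) ⊗ₜ[R] (c.comp (uMap N k i)), ?_, ?_⟩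
  · intro z
    dsimp only
    induction z using TensorProduct.induction_on with
    | zero => simp
    | tmul x φ =>
      have hsingle : ∀ i : Fin k, (x i • (Pi.single i (1:R) : Fin k → R)) = Pi.single i (x i) := by
        intro i; funext j; by_cases h : j = i <;> simp [Pi.single_apply, h]
      have h1 : ∀ i : Fin k, ((teval (R := R) (Fin k → R) N I (x ⊗ₜ φ)).comp
          (uMap N k i)) = x i • φ := by
        intro i
        ext ν
        simp [uMap, map_smul]
      calc ∑ i : Fin k, Pi.single i (1:R) ⊗ₜ[R]
            ((teval (R := R) (Fin k → R) N I (x ⊗ₜ φ)).comp (uMap N k i))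
          = ∑ i : Fin k, (Pi.single i (x i) : Fin k → R) ⊗ₜ[R] φ := by
            refine Finset.sum_congr rfl fun i _ => ?_
            rw [h1, tmul_smul, smul_tmul', hsingle]
        _ = (∑ i : Fin k, Pi.single i (x i) : Fin k → R) ⊗ₜ[R] φ := by rw [sum_tmul]
        _ = x ⊗ₜ φ := by rw [Finset.univ_sum_single]
    | add z w hz hw =>
      simp only [map_add, LinearMap.add_comp, tmul_add, Finset.sum_add_distrib, hz, hw]
  · intro c
    dsimp only
    refine LinearMap.ext fun g => ?_
    have h3 : ∑ i : Fin k, uMap (R := R) N k i (g (Pi.single i 1)) = g := by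
      refine LinearMap.ext fun x => ?_
      have : (∑ i : Fin k, uMap (R := R) N k i (g (Pi.single i 1))) x
          = ∑ i : Fin k, x i • g (Pi.single i 1) := by
        simp [uMap]
      rw [this]
      have h4 : ∀ i : Fin k, x i • g (Pi.single i (1:R)) = g (Pi.single i (x i)) := by
        intro i
        rw [← map_smul]
        congr 1
        ext j
        by_cases h : j = i <;> simp [Pi.single_apply, h]
      simp_rw [h4, ← map_sum, Finset.univ_sum_single]
    calc (teval (R := R) (Fin k → R) N I
        (∑ i : Fin k, Pi.single i (1 : R) ⊗ₜ[R] (c.comp (uMap N k i)))) g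
        = ∑ i : Fin k, c (uMap N k i (g (Pi.single i 1))) := by
          rw [map_sum]; simp
      _ = c (∑ i : Fin k, uMap (R := R) N k i (g (Pi.single i 1))) := by rw [map_sum]
      _ = c g := by rw [h3]

end base

end Stmt10Aux

namespace Stmt10Aux

variable {R : Type u} [CommRing R]

section exactness

variable {A B Cc N I : Type u} [AddCommGroup A] [Module R A] [AddCommGroup B] [Module R B]
  [AddCommGroup Cc] [Module R Cc] [AddCommGroup N] [Module R N] [AddCommGroup I] [Module R I]

lemma lcomp_surjective_of_injective (hI : Module.Injective R I) (u : A →ₗ[R] B)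
    (hu : Function.Injective u) : Function.Surjective (LinearMap.lcomp R I u) := by
  intro χ
  obtain ⟨h, hh⟩ := hI.out u hu χ
  exact ⟨h, LinearMap.ext hh⟩

lemma lcomp_injective_of_surjective (p : A →ₗ[R] B) (hp : Function.Surjective p) :
    Function.Injective (LinearMap.lcomp R N p) := by
  intro a b hab
  refine LinearMap.ext fun x => ?_
  obtain ⟨y, rfl⟩ := hp x
  exact DFunLike.congr_fun hab y

lemma exists_factor_of_surjective (p : A →ₗ[R] B) (hp : Function.Surjective p)
    (φ : A →ₗ[R] N) (hker : LinearMap.ker p ≤ LinearMap.ker φ) :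
    ∃ ψ : B →ₗ[R] N, ψ.comp p = φ := by
  refine ⟨((LinearMap.ker p).liftQ φ hker).comp
    (p.quotKerEquivOfSurjective hp).symm.toLinearMap, ?_⟩
  refine LinearMap.ext fun a => ?_
  have h1 : (p.quotKerEquivOfSurjective hp).symm (p a) = Submodule.Quotient.mk a := by
    apply (p.quotKerEquivOfSurjective hp).injective
    rw [LinearEquiv.apply_symm_apply]
    rfl
  simp only [LinearMap.comp_apply, LinearEquiv.coe_coe, h1, Submodule.liftQ_apply]

lemma hom_left_exact (d : A →ₗ[R] B) (p : B →ₗ[R] Cc) (h : Function.Exact d p)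
    (hp : Function.Surjective p) :
    Function.Exact (LinearMap.lcomp R N p) (LinearMap.lcomp R N d) := by
  intro φ
  constructor
  · intro h0
    have hker : LinearMap.ker p ≤ LinearMap.ker φ := by
      rw [LinearMap.exact_iff.mp h]
      rintro _ ⟨a, rfl⟩
      exact LinearMap.mem_ker.mpr (DFunLike.congr_fun h0 a)
    obtain ⟨ψ, hψ⟩ := exists_factor_of_surjective p hp φ hker
    exact ⟨ψ, hψ⟩
  · rintro ⟨ψ, rfl⟩
    refine LinearMap.ext fun a => ?_
    simp [h.apply_apply_eq_zero]

lemma lcomp_exact_of_exact (hI : Module.Injective R I) (u : A →ₗ[R] B) (v : B →ₗ[R] Cc)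
    (huv : Function.Exact u v) :
    Function.Exact (LinearMap.lcomp R I v) (LinearMap.lcomp R I u) := by
  intro χ
  constructor
  · intro h0
    have hle : LinearMap.range u ≤ LinearMap.ker χ := by
      rintro _ ⟨a, rfl⟩
      exact LinearMap.mem_ker.mpr (DFunLike.congr_fun h0 a)
    have hKv : LinearMap.range u ≤ LinearMap.ker v := (LinearMap.exact_iff.mp huv).ge
    have hvbar : Function.Injective ((LinearMap.range u).liftQ v hKv) := by
      rw [← LinearMap.ker_eq_bot]
      exact Submodule.ker_liftQ_eq_bot _ _ _ (LinearMap.exact_iff.mp huv).le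
    obtain ⟨ξ, hξ⟩ := hI.out _ hvbar ((LinearMap.range u).liftQ χ hle)
    refine ⟨ξ, LinearMap.ext fun b => ?_⟩
    simpa using hξ (Submodule.Quotient.mk b)
  · rintro ⟨ξ, rfl⟩
    refine LinearMap.ext fun a => ?_
    simp [huv.apply_apply_eq_zero]

end exactness

section main

theorem teval_bijective [IsNoetherianRing R] (X N I : Type u) [AddCommGroup X] [Module R X]
    [AddCommGroup N] [Module R N] [AddCommGroup I] [Module R I]
    [Module.Finite R X] (hI : Module.Injective R I) :
    Function.Bijective (teval (R := R) X N I) := by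
  obtain ⟨n, p, hp⟩ := Module.Finite.exists_fin' R X
  have hK : Module.Finite R (LinearMap.ker p) :=
    Module.Finite.iff_fg.mpr (IsNoetherian.noetherian _)
  obtain ⟨m, q, hq⟩ := Module.Finite.exists_fin' R (LinearMap.ker p)
  set d : (Fin m → R) →ₗ[R] (Fin n → R) := (LinearMap.ker p).subtype.comp q with hd
  have hdp : Function.Exact d p := by
    rw [LinearMap.exact_iff, hd, LinearMap.range_comp, LinearMap.range_eq_top.mpr hq,
      Submodule.map_top, Submodule.range_subtype]
  have hnat_d := teval_natural (R := R) N I d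
  have hnat_p := teval_natural (R := R) N I p
  exact chase (d.rTensor (N →ₗ[R] I)) (p.rTensor (N →ₗ[R] I))
    (LinearMap.lcomp R I (LinearMap.lcomp R N d)) (LinearMap.lcomp R I (LinearMap.lcomp R N p))
    (teval (Fin m → R) N I) (teval (Fin n → R) N I) (teval X N I)
    (rTensor_exact (N →ₗ[R] I) hdp hp) (LinearMap.rTensor_surjective _ hp)
    (lcomp_exact_of_exact hI _ _ (hom_left_exact d p hdp hp))
    (lcomp_surjective_of_injective hI _ (lcomp_injective_of_surjective p hp))
    (fun a => (DFunLike.congr_fun hnat_d a).symm)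
    (fun a => (DFunLike.congr_fun hnat_p a).symm)
    (teval_bij_free N I m).2 (teval_bij_free N I n)

end main

end Stmt10Aux

namespace Stmt10Aux

variable {R : Type u} [CommRing R]

section kappa

variable (W : Type u) [AddCommGroup W] [Module R W]

/-- `Hom_R(W, Char R) ≅ Char W`. -/
noncomputable def kappa : (W →ₗ[R] CharacterModule R) ≃ₗ[R] CharacterModule W :=
  (CharacterModule.homEquiv (R := R) (A := W) (B := R)).trans
    (CharacterModule.congr (TensorProduct.rid R W))

variable {W}

lemma kappa_apply (φ : W →ₗ[R] CharacterModule R) (w : W) : kappa W φ w = φ w 1 := by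
  have h : kappa W φ w
      = (CharacterModule.homEquiv φ) ((TensorProduct.rid R W).symm w) := rfl
  rw [h, TensorProduct.rid_symm_apply]
  rfl

lemma charR_injective : Module.Injective R (CharacterModule R) :=
  (Module.Flat.iff_characterModule_injective).mp inferInstance

lemma exists_hom_ne_zero {a : W} (ha : a ≠ 0) :
    ∃ φ : W →ₗ[R] CharacterModule R, φ a ≠ 0 := by
  obtain ⟨c, hc⟩ := CharacterModule.exists_character_apply_ne_zero_of_ne_zero ha
  refine ⟨(kappa (R := R) W).symm c, fun h => hc ?_⟩
  have h2 := kappa_apply ((kappa (R := R) W).symm c) a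
  rw [(kappa (R := R) W).apply_symm_apply, h] at h2
  rw [h2]
  rfl

lemma injective_of_lcomp_surjective {A B : Type u} [AddCommGroup A] [Module R A]
    [AddCommGroup B] [Module R B] (f : A →ₗ[R] B)
    (h : Function.Surjective (LinearMap.lcomp R (CharacterModule R) f)) :
    Function.Injective f := by
  rw [injective_iff_map_eq_zero]
  intro a ha
  by_contra h0
  obtain ⟨φ, hφ⟩ := exists_hom_ne_zero (R := R) h0
  obtain ⟨ψ, hψ⟩ := h φ
  apply hφ
  have h1 := DFunLike.congr_fun hψ a
  simp only [LinearMap.lcomp_apply] at h1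
  rw [← h1, ha, map_zero]

lemma surjective_of_lcomp_injective {A B : Type u} [AddCommGroup A] [Module R A]
    [AddCommGroup B] [Module R B] (f : A →ₗ[R] B)
    (h : Function.Injective (LinearMap.lcomp R (CharacterModule R) f)) :
    Function.Surjective f := by
  rw [← LinearMap.range_eq_top]
  by_contra hr
  obtain ⟨b, hb⟩ : ∃ b : B, b ∉ LinearMap.range f := by
    by_contra hb
    push_neg at hb
    exact hr (Submodule.eq_top_iff'.mpr hb)
  have hb0 : (LinearMap.range f).mkQ b ≠ 0 := by
    rw [Submodule.mkQ_apply, Ne, Submodule.Quotient.mk_eq_zero]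
    exact hb
  obtain ⟨φ, hφ⟩ := exists_hom_ne_zero (R := R) hb0
  have hz : LinearMap.lcomp R (CharacterModule R) f (φ.comp (LinearMap.range f).mkQ) = 0 := by
    refine LinearMap.ext fun a => ?_
    have : (LinearMap.range f).mkQ (f a) = 0 := by
      rw [Submodule.mkQ_apply, Submodule.Quotient.mk_eq_zero]
      exact ⟨a, rfl⟩
    simp [this]
  have h2 : φ.comp (LinearMap.range f).mkQ = 0 := h (by rw [hz, map_zero])
  exact hφ (by simpa using DFunLike.congr_fun h2 b)

end kappa

section eps

variable (C : Type u) [AddCommGroup C] [Module R C]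

/-- evaluation `C ⊗ Hom(C, M) → M`. -/
noncomputable def epsMap (Mo : Type u) [AddCommGroup Mo] [Module R Mo] :
    (C ⊗[R] (C →ₗ[R] Mo)) →ₗ[R] Mo :=
  TensorProduct.lift (LinearMap.id (R := R) (M := C →ₗ[R] Mo)).flip

@[simp] lemma epsMap_tmul (Mo : Type u) [AddCommGroup Mo] [Module R Mo] (c : C)
    (g : C →ₗ[R] Mo) : epsMap C Mo (c ⊗ₜ[R] g) = g c := rfl

/-- coevaluation `N → Hom(C, C ⊗ N)`. -/
noncomputable def etaMap (Nn : Type u) [AddCommGroup Nn] [Module R Nn] :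
    Nn →ₗ[R] (C →ₗ[R] (C ⊗[R] Nn)) := (TensorProduct.mk R C Nn).flip

@[simp] lemma etaMap_apply (Nn : Type u) [AddCommGroup Nn] [Module R Nn] (n : Nn) (c : C) :
    etaMap C Nn n c = c ⊗ₜ[R] n := rfl

variable [IsNoetherianRing R] [Module.Finite R C]

lemma eps_bijective (hsd : Function.Bijective (LinearMap.lsmul R C)) (I : Type u)
    [AddCommGroup I] [Module R I] (hI : Module.Injective R I) :
    Function.Bijective (epsMap (R := R) C I) := by
  have h2 : Function.Bijective (teval (R := R) C C I) := teval_bijective C C I hI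
  set e1 : R ≃ₗ[R] (C →ₗ[R] C) := LinearEquiv.ofBijective (LinearMap.lsmul R C) hsd with he1
  set e2 : ((C →ₗ[R] C) →ₗ[R] I) ≃ₗ[R] (R →ₗ[R] I) :=
    LinearEquiv.arrowCongr e1.symm (LinearEquiv.refl R I) with he2
  set e3 : (R →ₗ[R] I) ≃ₗ[R] I := LinearMap.ringLmapEquivSelf R R I with he3
  have hclaim : epsMap (R := R) C I =
      e3.toLinearMap.comp (e2.toLinearMap.comp (teval (R := R) C C I)) := by
    apply TensorProduct.ext'
    intro c φ
    simp [he1, he2, he3, LinearEquiv.arrowCongr]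
  rw [hclaim]
  rw [LinearMap.coe_comp, LinearMap.coe_comp]
  exact e3.bijective.comp (e2.bijective.comp h2)

lemma eta_bijective_hom (hsd : Function.Bijective (LinearMap.lsmul R C)) (I : Type u)
    [AddCommGroup I] [Module R I] (hI : Module.Injective R I) :
    Function.Bijective (etaMap (R := R) C (C →ₗ[R] I)) := by
  set A : (C →ₗ[R] (C ⊗[R] (C →ₗ[R] I))) ≃ₗ[R] (C →ₗ[R] I) :=
    LinearEquiv.congrRight (LinearEquiv.ofBijective (epsMap (R := R) C I) (eps_bijective C hsd I hI))
    with hA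
  have hclaim : A.toLinearMap.comp (etaMap (R := R) C (C →ₗ[R] I)) = LinearMap.id := by
    refine LinearMap.ext fun g => LinearMap.ext fun c => ?_
    simp [hA, LinearEquiv.congrRight]
  have heq : ⇑(etaMap (R := R) C (C →ₗ[R] I)) = ⇑A.symm := by
    funext x
    apply A.injective
    rw [A.apply_symm_apply]
    exact DFunLike.congr_fun hclaim x
  rw [heq]
  exact A.symm.bijective

omit [IsNoetherianRing R] [Module.Finite R C] in
lemma eta_bijective_congr {Nn Nn' : Type u} [AddCommGroup Nn] [Module R Nn]
    [AddCommGroup Nn'] [Module R Nn'] (e : Nn ≃ₗ[R] Nn')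
    (h : Function.Bijective (etaMap (R := R) C Nn)) :
    Function.Bijective (etaMap (R := R) C Nn') := by
  have hclaim : etaMap (R := R) C Nn' =
      (LinearEquiv.congrRight (TensorProduct.congr (LinearEquiv.refl R C) e)).toLinearMap.comp
        ((etaMap (R := R) C Nn).comp e.symm.toLinearMap) := by
    refine LinearMap.ext fun n => LinearMap.ext fun c => ?_
    simp [LinearEquiv.congrRight]
  rw [hclaim, LinearMap.coe_comp, LinearMap.coe_comp]
  exact (LinearEquiv.bijective _).comp (h.comp (LinearEquiv.bijective _))

end eps

end Stmt10Aux

namespace Stmt10Aux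

variable {R : Type u} [CommRing R]

lemma injective_of_equiv {Q Q' : Type u} [AddCommGroup Q] [Module R Q] [AddCommGroup Q']
    [Module R Q'] (e : Q ≃ₗ[R] Q') (h : Module.Injective R Q) : Module.Injective R Q' where
  out X Y _ _ _ _ f hf g := by
    obtain ⟨h', hh⟩ := h.out f hf (e.symm.toLinearMap.comp g)
    refine ⟨e.toLinearMap.comp h', fun x => ?_⟩
    rw [LinearMap.comp_apply, hh x]
    simp

theorem forward_main [IsNoetherianRing R] (C : Type u) [AddCommGroup C] [Module R C]
    [Module.Finite R C] (hsd : Function.Bijective (LinearMap.lsmul R C))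
    (M I : Type u) [AddCommGroup M] [Module R M] [AddCommGroup I] [Module R I]
    (hI : Module.Injective R I) (e : CharacterModule M ≃ₗ[R] (C →ₗ[R] I)) :
    Module.Flat R (C →ₗ[R] M) ∧ Function.Bijective (epsMap (R := R) C M) := by
  have hJ : Module.Injective R (CharacterModule R) := charR_injective
  have htev : Function.Bijective (teval (R := R) C M (CharacterModule R)) :=
    teval_bijective C M _ hJ
  have heps : Function.Bijective (epsMap (R := R) C I) := eps_bijective C hsd I hI
  constructor
  · rw [Module.Flat.iff_characterModule_injective]
    refine injective_of_equiv (Q := I) ?_ hI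
    exact ((((kappa (R := R) (C →ₗ[R] M)).symm.trans
      (LinearEquiv.ofBijective (teval (R := R) C M (CharacterModule R)) htev).symm).trans
      (TensorProduct.congr (LinearEquiv.refl R C) ((kappa (R := R) M).trans e))).trans
      (LinearEquiv.ofBijective (epsMap (R := R) C I) heps)).symm
  · have hη : Function.Bijective (etaMap (R := R) C (M →ₗ[R] CharacterModule R)) :=
      eta_bijective_congr C ((kappa (R := R) M).trans e).symm (eta_bijective_hom C hsd I hI)
    have hclaim :
        (TensorProduct.lift.equiv (RingHom.id R) C (C →ₗ[R] M) (CharacterModule R)).toLinearMap.comp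
          (((LinearEquiv.congrRight (LinearEquiv.ofBijective
              (teval (R := R) C M (CharacterModule R)) htev)).toLinearMap).comp
            (etaMap (R := R) C (M →ₗ[R] CharacterModule R)))
        = LinearMap.lcomp R (CharacterModule R) (epsMap (R := R) C M) := by
      refine LinearMap.ext fun φ => ?_
      apply TensorProduct.ext'
      intro c g
      simp [LinearEquiv.congrRight, TensorProduct.lift.equiv]
    have hdual : Function.Bijective
        (LinearMap.lcomp R (CharacterModule R) (epsMap (R := R) C M)) := by
      rw [← hclaim, LinearMap.coe_comp, LinearMap.coe_comp]
      exact (LinearEquiv.bijective _).comp ((LinearEquiv.bijective _).comp hη)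
    exact ⟨injective_of_lcomp_surjective _ hdual.2, surjective_of_lcomp_injective _ hdual.1⟩

end Stmt10Aux


/-- The Pontryagin dual `M*` is `C`-injective iff `M` is `C`-flat. -/
theorem stmt10 (R : Type u) [CommRing R] [IsNoetherianRing R]
    (C : ModuleCat.{u} R) (hC : IsSemidualizing R C) (M : ModuleCat.{u} R) :
    IsCInjective R C (ModuleCat.of R (CharacterModule ↥M)) ↔ IsCFlat R C M := by
  constructor
  · rintro ⟨I, hinj, ⟨e⟩⟩
    haveI : Module.Finite R ↥C := hC.1
    obtain ⟨hflat, hbij⟩ :=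
      Stmt10Aux.forward_main (↥C) hC.2.1 (↥M) (↥I) hinj e
    exact ⟨ModuleCat.of R (↥C →ₗ[R] ↥M), hflat,
      ⟨(LinearEquiv.ofBijective _ hbij).symm.trans
        (TensorProduct.comm R (↥C) (↥C →ₗ[R] ↥M))⟩⟩
  · rintro ⟨F, hflat, ⟨e⟩⟩
    refine ⟨ModuleCat.of R (CharacterModule ↥F),
      Module.Flat.iff_characterModule_injective.mp hflat, ⟨?_⟩⟩
    exact ((CharacterModule.congr e).trans
      (CharacterModule.congr (TensorProduct.comm R ↥F ↥C))).trans
      (CharacterModule.homEquiv (R := R) (A := ↥C) (B := ↥F)).symm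
end

section
/- Let R be a commutative noetherian ring, C a semidualizing R-module, and M an R-module. If Tor_i^R(C,M) = 0 for all i ≥ 1, then the Pontryagin dual M* = Hom_ℤ(M, ℚ/ℤ) is C-cotorsion, i.e. Ext_R^i(F ⊗_R C, M*) = 0 for every flat R-module F and every i ≥ 1. -/
open CategoryTheory TensorProduct

universe u

/-! ### Auxiliary machinery for `stmt11` -/

namespace Stmt11Aux

open TensorProduct LinearMap Function CategoryTheory CategoryTheory.Limits

variable {R : Type u} [CommRing R]

lemma subsingleton_of_isZero {M : ModuleCat.{u} R} (h : IsZero M) : Subsingleton ↥M := by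
  constructor
  intro a b
  have h0 : (𝟙 M : M ⟶ M) = 0 := h.eq_of_src _ _
  calc a = (𝟙 M : M ⟶ M) a := rfl
    _ = (0 : M ⟶ M) a := by rw [h0]
    _ = (0 : M ⟶ M) b := rfl
    _ = (𝟙 M : M ⟶ M) b := by rw [h0]
    _ = b := rfl

lemma injective_of_exact_comp {A B N B' : Type u}
    [AddCommGroup A] [AddCommGroup B] [AddCommGroup N] [AddCommGroup B']
    [Module R A] [Module R B] [Module R N] [Module R B']
    {f : A →ₗ[R] B} {π : B →ₗ[R] N} {ι : N →ₗ[R] B'}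
    (hfπ : Function.Exact f π) (hπ : Function.Surjective π)
    (h : Function.Exact f (ι ∘ₗ π)) : Function.Injective ι := by
  rw [injective_iff_map_eq_zero]
  intro n hn
  obtain ⟨b, rfl⟩ := hπ n
  exact (hfπ b).mpr ((h b).mp hn)

/-- The key `Tor₁`-balancing chase: given short exact sequences `0 → K → P → Y → 0` and
`0 → N → Q → M → 0` with `P`, `Q` flat, if `Y ⊗ N → Y ⊗ Q` is injective then
`K ⊗ M → P ⊗ M` is injective. -/
lemma injective_rTensor_of_injective_lTensor
    {K P Y N Q M : Type u}
    [AddCommGroup K] [AddCommGroup P] [AddCommGroup Y] [AddCommGroup N] [AddCommGroup Q]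
    [AddCommGroup M] [Module R K] [Module R P] [Module R Y] [Module R N] [Module R Q]
    [Module R M] [Module.Flat R P] [Module.Flat R Q]
    {k : K →ₗ[R] P} {p : P →ₗ[R] Y} {n : N →ₗ[R] Q} {q : Q →ₗ[R] M}
    (hk : Function.Injective k)
    (hkp : Function.Exact k p) (hp : Function.Surjective p)
    (hnq : Function.Exact n q) (hq : Function.Surjective q)
    (hY : Function.Injective (lTensor Y n)) :
    Function.Injective (rTensor M k) := by
  rw [injective_iff_map_eq_zero]
  intro x hx
  obtain ⟨x', rfl⟩ := lTensor_surjective K hq x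
  have h1 : lTensor P q (rTensor Q k x') = 0 := by
    rw [← LinearMap.comp_apply, lTensor_comp_rTensor, ← rTensor_comp_lTensor,
      LinearMap.comp_apply, hx]
  obtain ⟨x'', hx''⟩ := (lTensor_exact P hnq hq (rTensor Q k x')).mp h1
  have h2 : lTensor Y n (rTensor N p x'') = 0 := by
    rw [← LinearMap.comp_apply, lTensor_comp_rTensor, ← rTensor_comp_lTensor,
      LinearMap.comp_apply, hx'', ← LinearMap.comp_apply, ← rTensor_comp,
      hkp.linearMap_comp_eq_zero, rTensor_zero, LinearMap.zero_apply]
  have h3 : rTensor N p x'' = 0 := by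
    rw [injective_iff_map_eq_zero] at hY; exact hY _ h2
  obtain ⟨w, hw⟩ := (rTensor_exact N hkp hp x'').mp h3
  have h4 : rTensor Q k (x' - lTensor K n w) = 0 := by
    rw [map_sub, ← LinearMap.comp_apply, rTensor_comp_lTensor, ← lTensor_comp_rTensor,
      LinearMap.comp_apply, hw, hx'', sub_self]
  have h5 : x' = lTensor K n w := by
    have hi := Module.Flat.rTensor_preserves_injective_linearMap (M := Q) k hk
    rw [injective_iff_map_eq_zero] at hi
    have := hi _ h4
    rwa [sub_eq_zero] at this
  rw [h5, ← LinearMap.comp_apply, ← lTensor_comp, hnq.linearMap_comp_eq_zero,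
    lTensor_zero, LinearMap.zero_apply]

/-- Snake-style chase: one induction step for the exactness of `P ⊗ M` from that of `P ⊗ N`,
where `0 → N → Q → M → 0` is exact with `Q` flat. -/
lemma snake_step {P3 P2 P1 P0 N Q M : Type u}
    [AddCommGroup P3] [AddCommGroup P2] [AddCommGroup P1] [AddCommGroup P0]
    [AddCommGroup N] [AddCommGroup Q] [AddCommGroup M]
    [Module R P3] [Module R P2] [Module R P1] [Module R P0]
    [Module R N] [Module R Q] [Module R M]
    [Module.Flat R P0] [Module.Flat R Q]
    {d2 : P3 →ₗ[R] P2} {d1 : P2 →ₗ[R] P1} {d0 : P1 →ₗ[R] P0}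
    {n : N →ₗ[R] Q} {q : Q →ₗ[R] M}
    (hd : Function.Exact d2 d1) (hdd : d0 ∘ₗ d1 = 0)
    (hn : Function.Injective n)
    (hnq : Function.Exact n q) (hq : Function.Surjective q)
    (hN : Function.Exact (rTensor N d1) (rTensor N d0)) :
    Function.Exact (rTensor M d2) (rTensor M d1) := by
  intro x
  constructor
  · intro hx
    obtain ⟨y, rfl⟩ := lTensor_surjective P2 hq x
    have h1 : lTensor P1 q (rTensor Q d1 y) = 0 := by
      rw [← LinearMap.comp_apply, lTensor_comp_rTensor, ← rTensor_comp_lTensor,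
        LinearMap.comp_apply, hx]
    obtain ⟨z, hz⟩ := (lTensor_exact P1 hnq hq (rTensor Q d1 y)).mp h1
    have h2 : lTensor P0 n (rTensor N d0 z) = 0 := by
      rw [← LinearMap.comp_apply, lTensor_comp_rTensor, ← rTensor_comp_lTensor,
        LinearMap.comp_apply, hz, ← LinearMap.comp_apply, ← rTensor_comp, hdd,
        rTensor_zero, LinearMap.zero_apply]
    have h3 : rTensor N d0 z = 0 := by
      have hi := Module.Flat.lTensor_preserves_injective_linearMap (M := P0) n hn
      rw [injective_iff_map_eq_zero] at hi
      exact hi _ h2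
    obtain ⟨w, hw⟩ := (hN z).mp h3
    have h4 : rTensor Q d1 (y - lTensor P2 n w) = 0 := by
      rw [map_sub, ← LinearMap.comp_apply (rTensor Q d1), rTensor_comp_lTensor,
        ← lTensor_comp_rTensor, LinearMap.comp_apply, hw, hz, sub_self]
    obtain ⟨v, hv⟩ := (Module.Flat.rTensor_exact Q hd (y - lTensor P2 n w)).mp h4
    refine ⟨lTensor P3 q v, ?_⟩
    have h5 : rTensor M d2 (lTensor P3 q v) = lTensor P2 q (rTensor Q d2 v) := by
      rw [← LinearMap.comp_apply, rTensor_comp_lTensor, ← lTensor_comp_rTensor,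
        LinearMap.comp_apply]
    rw [h5, hv, map_sub, ← LinearMap.comp_apply, ← lTensor_comp,
      hnq.linearMap_comp_eq_zero, lTensor_zero, LinearMap.zero_apply, sub_zero]
  · rintro ⟨v, rfl⟩
    rw [← LinearMap.comp_apply, ← rTensor_comp, hd.linearMap_comp_eq_zero,
      rTensor_zero, LinearMap.zero_apply]

/-- A flat resolution, given by concrete data. -/
structure Res (R : Type u) [CommRing R] (M : Type u) [AddCommGroup M] [Module R M] :
    Type (u + 1) where
  Q : ℕ → Type u
  [acg : ∀ n, AddCommGroup (Q n)]
  [mod : ∀ n, Module R (Q n)]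
  flat : ∀ n, Module.Flat R (Q n)
  d : ∀ n, Q (n + 1) →ₗ[R] Q n
  ε : Q 0 →ₗ[R] M
  exact_d : ∀ n, Function.Exact (d (n + 1)) (d n)
  exact0 : Function.Exact (d 0) ε
  surj : Function.Surjective ε

attribute [instance] Res.acg Res.mod

namespace Res

variable {M : Type u} [AddCommGroup M] [Module R M] (res : Res R M)

/-- The first syzygy resolution. -/
noncomputable def syz : Res R ↥(LinearMap.range (res.d 0)) where
  Q n := res.Q (n + 1)
  flat n := res.flat (n + 1)
  d n := res.d (n + 1)
  ε := (res.d 0).rangeRestrict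
  exact_d n := res.exact_d (n + 1)
  exact0 := by
    intro y
    rw [show ((res.d 0).rangeRestrict y = 0) ↔ res.d 0 y = 0 by
      rw [Subtype.ext_iff]; rfl]
    exact res.exact_d 0 y
  surj := (res.d 0).surjective_rangeRestrict

lemma exact_subtype : Function.Exact (LinearMap.range (res.d 0)).subtype res.ε := by
  intro y
  rw [res.exact0 y]
  constructor
  · intro hy; exact ⟨⟨y, hy⟩, rfl⟩
  · rintro ⟨⟨z, hz⟩, rfl⟩; exact hz

variable (C : Type u) [AddCommGroup C] [Module R C]

/-- Vanishing of `Tor_{≥ 1}(C, M)` expressed via this resolution. -/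
def tv : Prop :=
  ∀ n, Function.Exact (lTensor C (res.d (n + 1))) (lTensor C (res.d n))

lemma tv_syz (h : res.tv C) : res.syz.tv C := fun n => h (n + 1)

lemma injective_lTensor_subtype (h : res.tv C) :
    Function.Injective (lTensor C (LinearMap.range (res.d 0)).subtype) := by
  have hfactor : lTensor C (res.d 0) =
      lTensor C (LinearMap.range (res.d 0)).subtype ∘ₗ lTensor C (res.d 0).rangeRestrict := by
    rw [← lTensor_comp, LinearMap.subtype_comp_codRestrict]
  refine injective_of_exact_comp (R := R)
    (f := lTensor C (res.d 1)) (π := lTensor C (res.d 0).rangeRestrict) ?_ ?_ ?_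
  · exact lTensor_exact C res.syz.exact0 res.syz.surj
  · exact lTensor_surjective C (res.d 0).surjective_rangeRestrict
  · rw [← hfactor]; exact h 0

end Res

lemma injective_lTensor_tensor (F : Type u) {C N' Q' : Type u}
    [AddCommGroup F] [AddCommGroup C] [AddCommGroup N'] [AddCommGroup Q']
    [Module R F] [Module R C] [Module R N'] [Module R Q'] [Module.Flat R F]
    {ι : N' →ₗ[R] Q'} (h : Function.Injective (lTensor C ι)) :
    Function.Injective (lTensor (F ⊗[R] C) ι) := by
  have hsq : (TensorProduct.assoc R F C Q').toLinearMap ∘ₗ lTensor (F ⊗[R] C) ι =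
      lTensor F (lTensor C ι) ∘ₗ (TensorProduct.assoc R F C N').toLinearMap := by
    apply TensorProduct.ext_threefold
    intro x y z
    rfl
  intro a b hab
  have h2 : lTensor F (lTensor C ι) ((TensorProduct.assoc R F C N') a) =
      lTensor F (lTensor C ι) ((TensorProduct.assoc R F C N') b) := by
    have ha : (TensorProduct.assoc R F C Q') (lTensor (F ⊗[R] C) ι a) =
        (TensorProduct.assoc R F C Q') (lTensor (F ⊗[R] C) ι b) := congrArg _ hab
    have e1 := LinearMap.congr_fun hsq a
    have e2 := LinearMap.congr_fun hsq b
    simp only [LinearMap.comp_apply, LinearEquiv.coe_coe] at e1 e2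
    rw [← e1, ← e2]
    exact ha
  exact (TensorProduct.assoc R F C N').injective
    (Module.Flat.lTensor_preserves_injective_linearMap (M := F) (lTensor C ι) h h2)

/-- The main balancing induction: if `Tor_{≥1}(C, M) = 0` (via the resolution `res`) and
`P` is any flat resolution of `F ⊗ C` with `F` flat, then `P ⊗ M` is exact in degrees `≥ 1`. -/
theorem core (C F : Type u) [AddCommGroup C] [Module R C] [AddCommGroup F] [Module R F]
    [Module.Flat R F] (k : ℕ) :
    ∀ (M : Type u) [AddCommGroup M] [Module R M] (res : Res R M), res.tv C →
      ∀ (P : Res R (F ⊗[R] C)),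
      Function.Exact (rTensor M (P.d (k + 1))) (rTensor M (P.d k)) := by
  induction k with
  | zero =>
    intro M _ _ res htv P
    have hflatP0 : Module.Flat R (P.Q 0) := P.flat 0
    have hflatQ0 : Module.Flat R (res.Q 0) := res.flat 0
    have hinj : Function.Injective (rTensor M (LinearMap.range (P.d 0)).subtype) :=
      injective_rTensor_of_injective_lTensor
        (Submodule.injective_subtype _) P.exact_subtype P.surj
        res.exact_subtype res.surj
        (injective_lTensor_tensor F (res.injective_lTensor_subtype C htv))
    have hfactor : rTensor M (P.d 0) =
        rTensor M (LinearMap.range (P.d 0)).subtype ∘ₗ rTensor M (P.d 0).rangeRestrict := by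
      rw [← rTensor_comp, LinearMap.subtype_comp_codRestrict]
    rw [hfactor, hinj.comp_exact_iff_exact]
    exact rTensor_exact M P.syz.exact0 P.syz.surj
  | succ k ih =>
    intro M _ _ res htv P
    have hflatPk : Module.Flat R (P.Q k) := P.flat k
    have hflatQ0 : Module.Flat R (res.Q 0) := res.flat 0
    exact snake_step (P.exact_d (k + 1)) (P.exact_d k).linearMap_comp_eq_zero
      (Submodule.injective_subtype _) res.exact_subtype res.surj
      (ih ↥(LinearMap.range (res.d 0)) res.syz (res.tv_syz C htv) P)

/-- Exactness dualizes to character modules. -/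
lemma dual_exact {A B C' : Type u} [AddCommGroup A] [AddCommGroup B] [AddCommGroup C']
    [Module R A] [Module R B] [Module R C']
    {f : A →ₗ[R] B} {g : B →ₗ[R] C'} (h : Function.Exact f g) :
    Function.Exact (CharacterModule.dual g) (CharacterModule.dual f) := by
  intro c
  constructor
  · intro hc
    set π : B →+ ↥(LinearMap.range g) := g.rangeRestrict.toAddMonoidHom with hπdef
    have hπsurj : Function.Surjective π := g.surjective_rangeRestrict
    have hker : π.ker ≤ (c : B →+ AddCircle (1 : ℚ)).ker := by
      intro b hb
      have hgb : g b = 0 := by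
        have hb' : g.rangeRestrict b = 0 := hb
        rw [Subtype.ext_iff] at hb'; exact hb'
      obtain ⟨a, rfl⟩ := (h b).mp hgb
      exact congr($(hc) a)
    let c' : CharacterModule ↥(LinearMap.range g) :=
      (π.liftOfRightInverse (Function.surjInv hπsurj)
        (Function.rightInverse_surjInv hπsurj)) ⟨c, hker⟩
    have hc' : ∀ b : B, c' (π b) = c b := fun b =>
      π.liftOfRightInverse_comp_apply _ _ ⟨c, hker⟩ b
    obtain ⟨e, he⟩ := CharacterModule.dual_surjective_of_injective
      (LinearMap.range g).subtype (Submodule.injective_subtype _) c'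
    refine ⟨e, ?_⟩
    ext b
    have h1 : (CharacterModule.dual (R := R) g e) b = e (g b) := rfl
    rw [h1, show g b = (LinearMap.range g).subtype (g.rangeRestrict b) from rfl]
    have h2 := congr($(he) (g.rangeRestrict b))
    rw [show (CharacterModule.dual (R := R) (LinearMap.range g).subtype e)
        (g.rangeRestrict b) = e ((LinearMap.range g).subtype (g.rangeRestrict b)) from rfl] at h2
    rw [h2]
    exact hc' b
  · rintro ⟨e, rfl⟩
    ext a
    have h1 : (CharacterModule.dual (R := R) f (CharacterModule.dual (R := R) g e)) a
        = e (g (f a)) := rfl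
    rw [h1, h.apply_apply_eq_zero a, map_zero]
    rfl

/-- Extract a concrete flat resolution from a categorical projective resolution. -/
noncomputable def resOf {M : ModuleCat.{u} R} (P : ProjectiveResolution M) : Res R ↥M where
  Q n := ↥(P.complex.X n)
  flat n := by
    have h1 : Projective (P.complex.X n) := P.projective n
    have h2 : Module.Projective R ↥(P.complex.X n) :=
      (IsProjective.iff_projective ↥(P.complex.X n)).mpr h1
    infer_instance
  d n := (P.complex.d (n + 1) n).hom
  ε := (P.π.f 0).hom
  exact_d n := by
    have hE := P.exact_succ n
    rw [ShortComplex.ShortExact.moduleCat_exact_iff_function_exact] at hE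
    exact hE
  exact0 := by
    have hE := P.exact₀
    rw [ShortComplex.ShortExact.moduleCat_exact_iff_function_exact] at hE
    exact hE
  surj := by
    have hE : Epi (P.π.f 0) := inferInstance
    exact (ModuleCat.epi_iff_surjective _).mp hE

lemma tv_of_torZero {C M : ModuleCat.{u} R} (Q : ProjectiveResolution M)
    (hM : torZero R C M) : (resOf Q).tv ↥C := by
  intro n
  have h1 : Subsingleton (((Tor (ModuleCat.{u} R) (n + 1)).obj C).obj M) := hM (n + 1) (by omega)
  let T := (MonoidalCategory.tensoringLeft (ModuleCat.{u} R)).obj C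
  have h0 : IsZero ((T.leftDerived (n + 1)).obj M) := by
    have h1' : Subsingleton ↑((T.leftDerived (n + 1)).obj M) := h1
    exact ModuleCat.isZero_of_subsingleton _
  have h2 : IsZero ((((T.mapHomologicalComplex _).obj Q.complex)).homology (n + 1)) :=
    IsZero.of_iso h0 (Q.isoLeftDerivedObj T (n + 1)).symm
  have h3 := (HomologicalComplex.exactAt_iff_isZero_homology _ _).mpr h2
  rw [HomologicalComplex.exactAt_iff' _ (n + 2) (n + 1) n (by simp) (by simp)] at h3
  rw [ShortComplex.ShortExact.moduleCat_exact_iff_function_exact] at h3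
  exact h3

end Stmt11Aux

/-- If `Tor_i^R(C,M) = 0` for all `i ≥ 1`, then the Pontryagin dual
`M*` is `C`-cotorsion. -/
theorem stmt11 (R : Type u) [CommRing R] [IsNoetherianRing R]
    (C : ModuleCat.{u} R) (hC : IsSemidualizing R C) (M : ModuleCat.{u} R)
    (hM : torZero R C M) :
    IsCCotorsion R C (ModuleCat.of R (CharacterModule ↥M)) := by
  classical
  intro F hF i hi
  obtain ⟨n, rfl⟩ : ∃ n, i = n + 1 := ⟨i - 1, by omega⟩
  set X : ModuleCat.{u} R := ModuleCat.of R (↥F ⊗[R] ↥C) with hX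
  set Nstar : ModuleCat.{u} R := ModuleCat.of R (CharacterModule ↥M) with hNstar
  let P : CategoryTheory.ProjectiveResolution X :=
    (inferInstance : CategoryTheory.HasProjectiveResolution X).out.some
  let Q : CategoryTheory.ProjectiveResolution M :=
    (inferInstance : CategoryTheory.HasProjectiveResolution M).out.some
  haveI : Module.Flat R ↥F := hF
  have hcore : Function.Exact
      (LinearMap.rTensor ↥M ((Stmt11Aux.resOf P).d (n + 1)))
      (LinearMap.rTensor ↥M ((Stmt11Aux.resOf P).d n)) :=
    Stmt11Aux.core ↥C ↥F n ↥M (Stmt11Aux.resOf Q) (Stmt11Aux.tv_of_torZero Q hM)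
      (Stmt11Aux.resOf P)
  have hdual := Stmt11Aux.dual_exact hcore
  -- transfer to the Hom-complex via `CharacterModule.homEquiv`
  have hladder : Function.Exact
      (((Stmt11Aux.resOf P).d n).lcomp R (CharacterModule ↥M))
      (((Stmt11Aux.resOf P).d (n + 1)).lcomp R (CharacterModule ↥M)) := by
    refine Function.Exact.of_ladder_linearEquiv_of_exact
      (e₁ := CharacterModule.homEquiv.symm) (e₂ := CharacterModule.homEquiv.symm)
      (e₃ := CharacterModule.homEquiv.symm) ?_ ?_ hdual
    · rfl
    · rfl
  have hexactAt : (P.complex.linearYonedaObj R Nstar).ExactAt (n + 1) := by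
    rw [HomologicalComplex.exactAt_iff' _ n (n + 1) (n + 2) (by simp) (by simp)]
    rw [CategoryTheory.ShortComplex.ShortExact.moduleCat_exact_iff_function_exact]
    exact Function.Exact.of_ladder_linearEquiv_of_exact
      (e₁ := (ModuleCat.homLinearEquiv (S := R)).symm) (e₂ := (ModuleCat.homLinearEquiv (S := R)).symm)
      (e₃ := (ModuleCat.homLinearEquiv (S := R)).symm) (by ext; rfl) (by ext; rfl) hladder
  have hzero : CategoryTheory.Limits.IsZero
      ((P.complex.linearYonedaObj R Nstar).homology (n + 1)) := by
    rw [← HomologicalComplex.exactAt_iff_isZero_homology]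
    exact hexactAt
  have hfin : CategoryTheory.Limits.IsZero
      (((Ext R (ModuleCat.{u} R) (n + 1)).obj (Opposite.op X)).obj Nstar) :=
    CategoryTheory.Limits.IsZero.of_iso hzero (P.isoExt (n + 1) Nstar)
  exact Stmt11Aux.subsingleton_of_isZero hfin
end
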